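/- Assume K is algebraically closed. Then the ring E⁺ is not Noetherian, and consequently the Witt vector ring A⁺ = W(E⁺) is not Noetherian (even though it is a local-type 'two-dimensional' ring with W(E⁺)/pW(E⁺) ≅ E⁺). -/

import Mathlib

open scoped NNReal

/-- If `K` is algebraically closed (with a nontrivial rank-one valuation `v` with `v p < 1`),
then `E⁺` is not Noetherian, and consequently `A⁺ = W(E⁺)` is not Noetherian either. -/
theorem preTilt_not_noetherian
    (p : ℕ) [Fact p.Prime]
    (K : Type*) [Field K] [IsAlgClosed K] (v : Valuation K ℝ≥0)
    (O : Type*) [CommRing O] [Algebra O K] (hv : v.Integers O)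
    [Fact (v p ≠ 1)]
    (hnt : ∃ x : K, v x ≠ 0 ∧ v x ≠ 1) :
    haveI : Fact ¬IsUnit (p : O) :=
      Fact.mk <| mt hv.one_of_isUnit <| (map_natCast (algebraMap O K) p).symm ▸ ‹Fact (v p ≠ 1)›.1
    ¬ IsNoetherianRing (PreTilt O p) ∧
      ¬ IsNoetherianRing (WittVector p (PreTilt O p)) := by
  haveI : Fact ¬IsUnit (p : O) :=
    Fact.mk <| mt hv.one_of_isUnit <| (map_natCast (algebraMap O K) p).symm ▸ ‹Fact (v p ≠ 1)›.1
  classical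
  obtain ⟨x₀, hx0, hx1⟩ := hnt
  have hp := (Fact.out : p.Prime)
  -- WLOG `v x < 1`
  obtain ⟨x, hx0, hx1⟩ : ∃ x : K, v x ≠ 0 ∧ v x < 1 := by
    rcases lt_or_gt_of_ne hx1 with h | h
    · exact ⟨x₀, hx0, h⟩
    · refine ⟨x₀⁻¹, ?_, ?_⟩
      · simpa [map_inv₀] using hx0
      · rw [map_inv₀]
        exact inv_lt_one_of_one_lt₀ h
  -- v p < 1
  have hvp1 : v p < 1 := by
    have h1 : v (algebraMap O K (p : O)) ≤ 1 := hv.map_le_one (p : O)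
    rw [map_natCast (algebraMap O K) p] at h1
    exact lt_of_le_of_ne h1 Fact.out
  -- sequence of p-power roots of x in K
  have hroot : ∀ y : K, ∃ z : K, z ^ p = y := fun y =>
    IsAlgClosed.exists_pow_nat_eq y hp.pos
  choose rt hrt using hroot
  set xs : ℕ → K := fun n => rt^[n] x with hxs
  have hxs0 : xs 0 = x := rfl
  have hxssucc : ∀ n, xs (n + 1) ^ p = xs n := by
    intro n
    have : xs (n + 1) = rt (xs n) := by
      simp [hxs, Function.iterate_succ_apply']
    rw [this, hrt]
  have hxspow : ∀ n, xs n ^ p ^ n = x := by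
    intro n
    induction n with
    | zero => simp [hxs0]
    | succ n ih => rw [pow_succ, mul_comm, pow_mul, hxssucc, ih]
  have hxsne : ∀ n, v (xs n) ≠ 0 := by
    intro n h
    apply hx0
    rw [← hxspow n, map_pow, h, zero_pow (pow_ne_zero n hp.ne_zero)]
  have hxslt : ∀ n, v (xs n) < 1 := by
    intro n
    have : v (xs n) ^ p ^ n < 1 := by rw [← map_pow, hxspow n]; exact hx1
    exact (pow_lt_one_iff_of_nonneg (by positivity) (pow_ne_zero n hp.ne_zero)).mp this
  -- lift to O
  have hys : ∀ n, ∃ y : O, algebraMap O K y = xs n := fun n =>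
    hv.exists_of_le_one (hxslt n).le
  choose ys hys using hys
  have hyssucc : ∀ n, ys (n + 1) ^ p = ys n := by
    intro n
    apply hv.hom_inj
    rw [map_pow, hys, hys, hxssucc]
  -- the element f of the pre-tilt
  set f : PreTilt O p :=
    ⟨fun n => Ideal.Quotient.mk _ (ys n), fun n => by
      exact (map_pow (Ideal.Quotient.mk (Ideal.span {(p:O)})) (ys (n+1)) p).symm.trans
        (congrArg _ (hyssucc n))⟩ with hf
  have hcoeff : ∀ n, Perfection.coeff (ModP O p) p n f
      = Ideal.Quotient.mk _ (ys n) := fun n => rfl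
  -- find n with coeff n f ≠ 0
  obtain ⟨N, hN⟩ : ∃ n : ℕ, (v p) ^ n < v x :=
    exists_pow_lt_of_lt_one (zero_lt_iff.mpr hx0) hvp1
  have hcoeffN : Perfection.coeff (ModP O p) p N f ≠ 0 := by
    rw [hcoeff, ← ModP.v_p_lt_val hv, hys]
    by_contra h
    push_neg at h
    have h2 : v x ≤ v p ^ p ^ N := by
      calc v x = v (xs N) ^ p ^ N := by rw [← map_pow, hxspow]
      _ ≤ v p ^ p ^ N := pow_le_pow_left' h _
    have h3 : v p ^ p ^ N ≤ v p ^ N :=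
      pow_le_pow_of_le_one (by positivity) hvp1.le (Nat.le_of_lt (Nat.lt_pow_self (n := N) hp.one_lt))
    exact absurd ((h2.trans h3).trans_lt hN) (lt_irrefl _)
  have hfne : f ≠ 0 := by
    intro h
    apply hcoeffN
    rw [h]; exact map_zero _
  -- val f = v x < 1
  have hvalf : PreTilt.val K v O hv p f = v x := by
    show PreTilt.valAux K v O p f = v x
    rw [PreTilt.valAux_eq hv hcoeffN, PreTilt.coeff_def, hcoeff, ModP.preVal_mk hv (by rw [← hcoeff]; exact hcoeffN),
      hys, ← map_pow, hxspow]
  -- any unit has val dividing into 1 with vals ≤ 1; show f is not a unit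
  have hle1 : ∀ g : PreTilt O p, PreTilt.val K v O hv p g ≤ 1 := by
    intro g
    by_cases hg : g = 0
    · simp [hg]
    obtain ⟨n, hn⟩ : ∃ n, Perfection.coeff (ModP O p) p n g ≠ 0 :=
      not_forall.1 fun h => hg <| Perfection.ext fun n => by rw [h n]; exact (map_zero _).symm
    show PreTilt.valAux K v O p g ≤ 1
    rw [PreTilt.valAux_eq hv hn, PreTilt.coeff_def]
    obtain ⟨z, hz⟩ := Ideal.Quotient.mk_surjective (Perfection.coeff (ModP O p) p n g)
    rw [← hz, ModP.preVal_mk hv (hz ▸ hn)]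
    exact pow_le_one' (hv.map_le_one z) _
  have hfnu : ¬ IsUnit f := by
    intro hu
    obtain ⟨u, hu⟩ := hu
    have h1 : PreTilt.val K v O hv p (u : PreTilt O p)
        * PreTilt.val K v O hv p ((u⁻¹ : _) : PreTilt O p) = 1 := by
      rw [← Valuation.map_mul, Units.mul_inv, Valuation.map_one]
    have h2 : PreTilt.val K v O hv p (u : PreTilt O p) < 1 := hu ▸ hvalf ▸ hx1
    have := mul_lt_one_of_nonneg_of_lt_one_left (by positivity) h2
      (hle1 ((u⁻¹ : _) : PreTilt O p))
    rw [h1] at this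
    exact absurd this (lt_irrefl _)
  -- the chain of ideals of p-power roots of f
  set g : ℕ → PreTilt O p :=
    fun n => (Perfection.pthRoot (ModP O p) p)^[n] f with hg
  have hgsucc : ∀ n, g (n + 1) ^ p = g n := by
    intro n
    have h := RingHom.congr_fun (Perfection.frobenius_pthRoot (R := ModP O p) (p := p)) (g n)
    have e : g (n+1) = Perfection.pthRoot (ModP O p) p (g n) := Function.iterate_succ_apply' _ n f
    rw [e]; exact h
  have hgpow : ∀ n, g n ^ p ^ n = f := by
    intro n
    induction n with
    | zero => simp [hg]; exact pow_one f
    | succ n ih => rw [pow_succ, mul_comm, pow_mul, hgsucc, ih]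
  have hgne : ∀ n, g n ≠ 0 := by
    intro n h
    apply hfne
    rw [← hgpow n, h, zero_pow (pow_ne_zero n hp.ne_zero)]
  have hEnoeth : ¬ IsNoetherianRing (PreTilt O p) := by
    intro hnoe
    have hmono : Monotone fun n => Ideal.span {g n} := by
      apply monotone_nat_of_le_succ
      intro n
      rw [Ideal.span_singleton_le_span_singleton, ← hgsucc n]
      exact ⟨g (n+1) ^ (p - 1), by rw [← pow_succ', Nat.sub_add_cancel hp.one_lt.le]⟩
    obtain ⟨n, hn⟩ := monotone_stabilizes_iff_noetherian.mpr hnoe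
      ⟨fun n => Ideal.span {g n}, hmono⟩
    have h1 : Ideal.span {g (n+1)} ≤ Ideal.span {g n} :=
      le_of_eq (hn (n+1) (Nat.le_succ n)).symm
    have h2 : g n ∣ g (n + 1) := Ideal.span_singleton_le_span_singleton.mp h1
    obtain ⟨c, hc⟩ := h2
    -- g (n+1) = g(n+1)^p * c  ⇒ g(n+1) is a unit
    rw [← hgsucc n] at hc
    have h3 : g (n + 1) * (1 - g (n + 1) ^ (p - 1) * c) = 0 := by
      have : g (n+1) ^ p = g (n+1) * g (n+1) ^ (p-1) := by
        rw [← pow_succ', Nat.sub_add_cancel hp.one_lt.le]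
      rw [mul_sub, mul_one]
      rw [this] at hc
      rw [← mul_assoc, ← hc, sub_self]
    haveI := PreTilt.isDomain K v O hv p
    rcases mul_eq_zero.mp h3 with h | h
    · exact hgne (n+1) h
    · have hu : IsUnit (g (n+1)) := by
        refine IsUnit.of_mul_eq_one (g (n+1) ^ (p - 2) * c) ?_
        have h2le := hp.two_le
        have h21 : p - 2 + 1 = p - 1 := by omega
        rw [← mul_assoc, ← pow_succ', h21]
        exact (sub_eq_zero.mp h).symm
      exact hfnu (by rw [← hgpow (n+1)]; exact hu.pow _)
  refine ⟨hEnoeth, fun hW => hEnoeth ?_⟩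
  haveI := hW
  refine isNoetherianRing_of_surjective (WittVector p (PreTilt O p)) _
    (WittVector.constantCoeff (p := p)) ?_
  exact fun r => ⟨WittVector.mk p (fun _ => r), rfl⟩
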